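/- arXiv:2206.02863 — 2 statements merged into one kernel-verified Lean document; each statement's English description precedes it below -/
import Mathlib

section
/- For every positive integer n, r_n ≥ √(n/2). -/
open scoped ComplexOrder

/-- The operator norm (induced by Euclidean norms) of a complex matrix. -/
noncomputable def Matrix.copNorm {m n : Type*} [Fintype m] [Fintype n] [DecidableEq n]
    (M : Matrix m n ℂ) : ℝ :=
  ‖LinearMap.toContinuousLinearMap (Matrix.toEuclideanLin M)‖

/-- The operator norm (induced by Euclidean norms) of a real matrix. -/
noncomputable def Matrix.ropNorm {m n : Type*} [Fintype m] [Fintype n] [DecidableEq n]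
    (M : Matrix m n ℝ) : ℝ :=
  ‖LinearMap.toContinuousLinearMap (Matrix.toEuclideanLin M)‖

/-- The Schur norm of a complex square matrix: the supremum of `‖M ∘ C‖` over all
complex contractions `C`, where `∘` is the entrywise (Schur/Hadamard) product. -/
noncomputable def Matrix.schurNorm {n : Type*} [Fintype n] [DecidableEq n]
    (M : Matrix n n ℂ) : ℝ :=
  sSup {x | ∃ C : Matrix n n ℂ, Matrix.copNorm C ≤ 1 ∧ x = Matrix.copNorm (Matrix.hadamard M C)}

/-- `rSchur n`: the supremum of Schur norms of `n × n` real matrices whose entries all have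
absolute value at most `1`. -/
noncomputable def rSchur (n : ℕ) : ℝ :=
  sSup {x | ∃ M : Matrix (Fin n) (Fin n) ℝ, (∀ i j, |M i j| ≤ 1) ∧
    x = Matrix.schurNorm (M.map Complex.ofReal)}

section aux

open Complex Finset Matrix
open scoped Real Matrix.Norms.L2Operator

/- ### Geometric sums of roots of unity -/

private lemma RS.geom_exp (n : ℕ) (hn : 0 < n) (m : ℤ) :
    ∑ k ∈ Finset.range n, Complex.exp (2 * π * Complex.I * m * k / n) =
      if (n:ℤ) ∣ m then (n:ℂ) else 0 := by
  have hn' : (n:ℂ) ≠ 0 := Nat.cast_ne_zero.mpr hn.ne'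
  set z : ℂ := Complex.exp (2 * π * Complex.I * m / n) with hz
  have hzk : ∀ k : ℕ, Complex.exp (2 * π * Complex.I * m * k / n) = z ^ k := by
    intro k
    rw [hz, ← Complex.exp_nat_mul]
    congr 1
    field_simp
  have hzn : z ^ n = 1 := by
    rw [hz, ← Complex.exp_nat_mul]
    have : (n:ℂ) * (2 * π * Complex.I * m / n) = m * (2 * π * Complex.I) := by
      field_simp
    rw [this, Complex.exp_int_mul_two_pi_mul_I]
  simp_rw [hzk]
  by_cases hdvd : (n:ℤ) ∣ m
  · obtain ⟨t, rfl⟩ := hdvd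
    have hz1 : z = 1 := by
      rw [hz]
      have : 2 * π * Complex.I * ((n:ℤ) * t : ℤ) / n = t * (2 * π * Complex.I) := by
        push_cast
        field_simp
      rw [this, Complex.exp_int_mul_two_pi_mul_I]
    simp [hz1, if_pos (Dvd.intro t rfl)]
  · have hz1 : z ≠ 1 := by
      intro h
      rw [hz, Complex.exp_eq_one_iff] at h
      obtain ⟨t, ht⟩ := h
      apply hdvd
      refine ⟨t, ?_⟩
      have h2 : (2 * (π:ℂ) * Complex.I) ≠ 0 := by
        simp [Real.pi_ne_zero, Complex.I_ne_zero, Complex.ofReal_ne_zero]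
      have hmc : (m : ℂ) = ((n * t : ℤ) : ℂ) := by
        have h3 : 2 * (π:ℂ) * Complex.I * m = 2 * π * Complex.I * (n * t) := by
          field_simp at ht
          push_cast
          linear_combination (2 * π * Complex.I) * ht
        have h4 := mul_left_cancel₀ h2 h3
        push_cast
        exact h4
      exact_mod_cast hmc
    rw [geom_sum_eq hz1, hzn]
    simp [hdvd]

private lemma RS.exp_arg (m : ℤ) (k n : ℕ) :
    Complex.exp (2 * π * Complex.I * m * k / n) =
      Complex.exp (((2 * π * m * k / n : ℝ) : ℂ) * Complex.I) := by
  congr 1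
  push_cast
  ring

private lemma RS.cos_sum (n : ℕ) (hn : 0 < n) (m : ℤ) :
    ∑ k ∈ Finset.range n, Real.cos (2 * π * m * k / n) =
      if (n:ℤ) ∣ m then (n:ℝ) else 0 := by
  have h := RS.geom_exp n hn m
  rw [Finset.sum_congr rfl (fun k _ => RS.exp_arg m k n)] at h
  have h2 := congrArg Complex.re h
  rw [Complex.re_sum] at h2
  simp only [Complex.exp_ofReal_mul_I_re, apply_ite Complex.re, Complex.natCast_re,
    Complex.zero_re] at h2
  exact h2

private lemma RS.sin_sum (n : ℕ) (hn : 0 < n) (m : ℤ) :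
    ∑ k ∈ Finset.range n, Real.sin (2 * π * m * k / n) = 0 := by
  have h := RS.geom_exp n hn m
  rw [Finset.sum_congr rfl (fun k _ => RS.exp_arg m k n)] at h
  have h2 := congrArg Complex.im h
  rw [Complex.im_sum] at h2
  simp only [Complex.exp_ofReal_mul_I_im, apply_ite Complex.im, Complex.natCast_im,
    Complex.zero_im, ite_self] at h2
  exact h2

private lemma RS.cos_prod (x y : ℝ) :
    Real.cos (x + π/4) * Real.cos (y + π/4) =
      (Real.cos (x - y) - Real.sin (x + y)) / 2 := by
  have h : Real.sqrt 2 * Real.sqrt 2 = 2 := Real.mul_self_sqrt (by norm_num)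
  rw [Real.cos_add, Real.cos_add, Real.cos_sub, Real.sin_add, Real.cos_pi_div_four,
    Real.sin_pi_div_four]
  linear_combination ((Real.cos x * Real.cos y - Real.cos x * Real.sin y
    - Real.sin x * Real.cos y + Real.sin x * Real.sin y)/4) * h

/- ### The matrix `Mat n` with `Mat n * (Mat n)ᵀ = (n/2) • 1` -/

private noncomputable def RS.Mat (n : ℕ) : Matrix (Fin n) (Fin n) ℝ :=
  Matrix.of fun j k => Real.cos (2 * π * (j.1 * k.1) / n + π/4)

private lemma RS.Mat_MMT (n : ℕ) (hn : 0 < n) :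
    RS.Mat n * (RS.Mat n)ᵀ = ((n:ℝ)/2) • (1 : Matrix (Fin n) (Fin n) ℝ) := by
  ext j l
  rw [Matrix.mul_apply]
  have key : ∀ k : Fin n, RS.Mat n j k * (RS.Mat n)ᵀ k l =
      (Real.cos (2 * π * (((j.1:ℤ) - (l.1:ℤ) : ℤ)) * k.1 / n)
        - Real.sin (2 * π * (((j.1:ℤ) + (l.1:ℤ) : ℤ)) * k.1 / n)) / 2 := by
    intro k
    show RS.Mat n j k * RS.Mat n l k = _
    show Real.cos (2 * π * (j.1 * k.1) / n + π/4)
      * Real.cos (2 * π * (l.1 * k.1) / n + π/4) = _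
    rw [RS.cos_prod]
    congr 2
    · congr 1
      push_cast
      ring
    · congr 1
      push_cast
      ring
  rw [Finset.sum_congr rfl (fun k _ => key k), ← Finset.sum_div, Finset.sum_sub_distrib]
  have hc : ∑ k : Fin n, Real.cos (2 * π * (((j.1:ℤ) - (l.1:ℤ) : ℤ)) * k.1 / n)
      = if (n:ℤ) ∣ ((j.1:ℤ) - (l.1:ℤ)) then (n:ℝ) else 0 := by
    rw [Fin.sum_univ_eq_sum_range
      (fun k => Real.cos (2 * π * (((j.1:ℤ) - (l.1:ℤ) : ℤ)) * k / n))]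
    exact RS.cos_sum n hn _
  have hs : ∑ k : Fin n, Real.sin (2 * π * (((j.1:ℤ) + (l.1:ℤ) : ℤ)) * k.1 / n) = 0 := by
    rw [Fin.sum_univ_eq_sum_range
      (fun k => Real.sin (2 * π * (((j.1:ℤ) + (l.1:ℤ) : ℤ)) * k / n))]
    exact RS.sin_sum n hn _
  rw [hc, hs]
  by_cases hjl : j = l
  · subst hjl
    simp [Matrix.smul_apply, Matrix.one_apply_eq]
  · have hnd : ¬ (n:ℤ) ∣ ((j.1:ℤ) - (l.1:ℤ)) := by
      intro hd
      have habs : |((j.1:ℤ) - (l.1:ℤ))| < n := by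
        rw [abs_sub_lt_iff]
        constructor <;>
        · have := j.2
          have := l.2
          omega
      have := Int.eq_zero_of_abs_lt_dvd hd habs
      apply hjl
      apply Fin.ext
      omega
    rw [if_neg hnd]
    have h1 : (1 : Matrix (Fin n) (Fin n) ℝ) j l = 0 := Matrix.one_apply_ne hjl
    simp [Matrix.smul_apply, h1]

private lemma RS.Mat_sumsq (n : ℕ) (hn : 0 < n) :
    ∑ j : Fin n, ∑ k : Fin n, RS.Mat n j k * RS.Mat n j k = (n:ℝ)^2 / 2 := by
  have inner : ∀ j : Fin n, ∑ k : Fin n, RS.Mat n j k * RS.Mat n j k = (n:ℝ)/2 := by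
    intro j
    have key : ∀ k : Fin n, RS.Mat n j k * RS.Mat n j k =
        (1 - Real.sin (2 * π * ((2 * j.1 : ℕ) : ℤ) * k.1 / n)) / 2 := by
      intro k
      show Real.cos (2 * π * (j.1 * k.1) / n + π/4)
        * Real.cos (2 * π * (j.1 * k.1) / n + π/4) = _
      rw [RS.cos_prod, sub_self, Real.cos_zero]
      congr 2
      congr 1
      push_cast
      ring
    rw [Finset.sum_congr rfl (fun k _ => key k), ← Finset.sum_div, Finset.sum_sub_distrib]
    have hs : ∑ k : Fin n, Real.sin (2 * π * ((2 * j.1 : ℕ) : ℤ) * k.1 / n) = 0 := by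
      rw [Fin.sum_univ_eq_sum_range (fun k => Real.sin (2 * π * ((2 * j.1 : ℕ) : ℤ) * k / n))]
      exact RS.sin_sum n hn _
    rw [hs]
    simp
  rw [Finset.sum_congr rfl (fun j _ => inner j)]
  simp
  ring

private lemma RS.Mat_abs_le_one (n : ℕ) (j k : Fin n) : |RS.Mat n j k| ≤ 1 :=
  Real.abs_cos_le_one _

/- ### Operator-norm facts -/

variable {m' n' : Type*} [Fintype m'] [Fintype n'] [DecidableEq n']

private lemma RS.copNorm_eq (A : Matrix m' n' ℂ) : A.copNorm = ‖A‖ := rfl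

omit [Fintype m'] in
private lemma RS.copNorm_unitary {n' : Type*} [Fintype n'] [DecidableEq n']
    {A : Matrix n' n' ℂ} (h : A * Aᴴ = 1) : A.copNorm ≤ 1 := by
  rw [RS.copNorm_eq]
  have h2 : Aᴴ * A = 1 := mul_eq_one_comm.mp h
  have h3 : ‖Aᴴ * A‖ = ‖A‖ * ‖A‖ := Matrix.l2_opNorm_conjTranspose_mul_self A
  rw [h2] at h3
  have h4 : ‖(1 : Matrix n' n' ℂ)‖ ≤ 1 := by
    rw [Matrix.cstar_norm_def, _root_.map_one]
    exact ContinuousLinearMap.norm_id_le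
  nlinarith [norm_nonneg A]

private lemma RS.euclid_apply_le {ι : Type*} [Fintype ι] (y : EuclideanSpace ℂ ι) (i : ι) :
    ‖y i‖ ≤ ‖y‖ := by
  rw [EuclideanSpace.norm_eq]
  rw [show ‖y i‖ = Real.sqrt (‖y i‖^2) from (Real.sqrt_sq (norm_nonneg _)).symm]
  apply Real.sqrt_le_sqrt
  exact Finset.single_le_sum (f := fun i => ‖y i‖^2) (fun _ _ => sq_nonneg _) (Finset.mem_univ i)

private lemma RS.euclid_norm_le_sum {ι : Type*} [Fintype ι] (y : EuclideanSpace ℂ ι) :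
    ‖y‖ ≤ ∑ i, ‖y i‖ := by
  rw [EuclideanSpace.norm_eq]
  rw [show ∑ i, ‖y i‖ = Real.sqrt ((∑ i, ‖y i‖)^2) from
    (Real.sqrt_sq (Finset.sum_nonneg fun _ _ => norm_nonneg _)).symm]
  apply Real.sqrt_le_sqrt
  exact Finset.sum_sq_le_sq_sum_of_nonneg (fun _ _ => norm_nonneg _)

private lemma RS.copNorm_le_sum_abs (A : Matrix m' n' ℂ) :
    A.copNorm ≤ ∑ j, ∑ k, ‖A j k‖ := by
  apply ContinuousLinearMap.opNorm_le_bound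
  · exact Finset.sum_nonneg fun _ _ => Finset.sum_nonneg fun _ _ => norm_nonneg _
  intro x
  have h1 : ‖LinearMap.toContinuousLinearMap (Matrix.toEuclideanLin A) x‖
      ≤ ∑ j, ‖(A *ᵥ (WithLp.equiv 2 (n' → ℂ)) x) j‖ := by
    refine le_trans (le_of_eq ?_) (RS.euclid_norm_le_sum (Matrix.toEuclideanLin A x))
    congr 1
  refine h1.trans ?_
  rw [Finset.sum_mul]
  apply Finset.sum_le_sum
  intro j _
  rw [Matrix.mulVec, dotProduct]
  refine (norm_sum_le _ _).trans ?_
  rw [Finset.sum_mul]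
  apply Finset.sum_le_sum
  intro k _
  rw [norm_mul]
  exact mul_le_mul_of_nonneg_left (RS.euclid_apply_le x k) (norm_nonneg _)

private lemma RS.abs_entry_le_copNorm (A : Matrix m' n' ℂ) (j : m') (k : n') :
    ‖A j k‖ ≤ A.copNorm := by
  have h := (LinearMap.toContinuousLinearMap (Matrix.toEuclideanLin A)).le_opNorm
    (EuclideanSpace.single k 1)
  rw [EuclideanSpace.norm_single, norm_one, mul_one] at h
  refine le_trans ?_ ((RS.euclid_apply_le _ j).trans h)
  apply le_of_eq
  have h5 : (Matrix.toEuclideanLin A (EuclideanSpace.single k 1)) j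
      = (A *ᵥ (Pi.single k 1)) j := rfl
  rw [show (LinearMap.toContinuousLinearMap (Matrix.toEuclideanLin A))
      (EuclideanSpace.single k 1)
      = Matrix.toEuclideanLin A (EuclideanSpace.single k 1) from rfl, h5]
  simp [Matrix.mulVec_single]

private lemma RS.sum_abs_le_card_copNorm {N : ℕ} (A : Matrix (Fin N) (Fin N) ℂ) :
    ‖∑ j, ∑ k, A j k‖ ≤ (N:ℝ) * A.copNorm := by
  set u : EuclideanSpace ℂ (Fin N) := (WithLp.equiv 2 (Fin N → ℂ)).symm (fun _ => 1) with hu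
  have hunorm : ‖u‖ = Real.sqrt N := by
    rw [EuclideanSpace.norm_eq]
    simp [hu]
  set f := LinearMap.toContinuousLinearMap (Matrix.toEuclideanLin A) with hf
  have hinner : (inner ℂ u (f u) : ℂ) = ∑ j, ∑ k, A j k := by
    rw [PiLp.inner_apply]
    have hfu : ∀ j, (f u) j = ∑ k, A j k := by
      intro j
      show (Matrix.toEuclideanLin A u) j = _
      show (A *ᵥ (fun _ => 1)) j = _
      rw [Matrix.mulVec, dotProduct]
      simp
    apply Finset.sum_congr rfl
    intro j _
    rw [hfu]
    simp [hu, RCLike.inner_apply]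
  have hb : ‖(inner ℂ u (f u) : ℂ)‖ ≤ ‖u‖ * (‖f‖ * ‖u‖) :=
    (norm_inner_le_norm u (f u)).trans
      (mul_le_mul_of_nonneg_left (f.le_opNorm u) (norm_nonneg u))
  rw [hinner, hunorm] at hb
  have hmm : Real.sqrt N * (‖f‖ * Real.sqrt N) = (N:ℝ) * ‖f‖ := by
    rw [show Real.sqrt N * (‖f‖ * Real.sqrt N) = (Real.sqrt N * Real.sqrt N) * ‖f‖ by ring,
      Real.mul_self_sqrt (Nat.cast_nonneg N)]
  rw [hmm] at hb
  exact hb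

end aux

open Matrix Complex Finset
open scoped Real

/-- For every positive integer `n`, `r n ≥ √(n / 2)`. -/
theorem rSchur_ge_sqrt_half (n : ℕ) (hn : 0 < n) :
    Real.sqrt ((n : ℝ) / 2) ≤ rSchur n := by
  classical
  set M : Matrix (Fin n) (Fin n) ℝ := RS.Mat n with hM
  set r : ℝ := Real.sqrt (2 / n) with hr
  have hn0 : (0:ℝ) < n := by exact_mod_cast hn
  have hr0 : 0 ≤ r := Real.sqrt_nonneg _
  -- the contraction C
  set C : Matrix (Fin n) (Fin n) ℂ := ((r • M).map Complex.ofReal) with hC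
  have hCH : C * Cᴴ = 1 := by
    have hconj : Cᴴ = ((r • M)ᵀ.map Complex.ofReal) := by
      ext j k
      simp [hC, Matrix.conjTranspose_apply, Matrix.map_apply, Complex.conj_ofReal,
        Matrix.transpose_apply]
    rw [hconj, hC]
    rw [show ((r • M).map Complex.ofReal) = ((r • M).map Complex.ofRealHom) from rfl,
      show ((r • M)ᵀ.map Complex.ofReal) = ((r • M)ᵀ.map Complex.ofRealHom) from rfl,
      ← Matrix.map_mul]
    have hMM : (r • M) * (r • M)ᵀ = 1 := by
      rw [Matrix.transpose_smul, Matrix.smul_mul, Matrix.mul_smul, hM,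
        RS.Mat_MMT n hn, smul_smul, smul_smul]
      have : r * r * ((n:ℝ)/2) = 1 := by
        have h2 : r * r = 2 / n := Real.mul_self_sqrt (by positivity)
        rw [h2]
        field_simp
      rw [this, one_smul]
    rw [hMM]
    exact Matrix.map_one _ (map_zero _) (map_one _)
  have hCnorm : C.copNorm ≤ 1 := RS.copNorm_unitary hCH
  -- the Schur product A = M ∘ C
  set A : Matrix (Fin n) (Fin n) ℂ := Matrix.hadamard (M.map Complex.ofReal) C with hA
  -- sum of entries of A
  have hAsum : ∑ j : Fin n, ∑ k : Fin n, A j k = ((r * ((n:ℝ)^2/2) : ℝ) : ℂ) := by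
    have : ∀ j k : Fin n, A j k = ((r * (M j k * M j k) : ℝ) : ℂ) := by
      intro j k
      simp only [hA, Matrix.hadamard_apply, hC, Matrix.map_apply, Matrix.smul_apply,
        smul_eq_mul]
      push_cast
      ring
    rw [Finset.sum_congr rfl fun j _ => Finset.sum_congr rfl fun k _ => this j k]
    norm_cast
    simp_rw [← Finset.mul_sum]
    rw [hM, RS.Mat_sumsq n hn]
    push_cast
    ring
  -- lower bound on the norm of the Schur product
  have hMabs : ∀ i j, |M i j| ≤ 1 := fun i j => RS.Mat_abs_le_one n i j
  have hAbound : Real.sqrt ((n:ℝ)/2) ≤ A.copNorm := by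
    have h1 := RS.sum_abs_le_card_copNorm A
    rw [hAsum, Complex.norm_real, Real.norm_eq_abs,
      _root_.abs_of_nonneg (show (0:ℝ) ≤ r * ((n:ℝ)^2/2) by positivity)] at h1
    have heq : Real.sqrt ((n:ℝ)/2) * n = r * ((n:ℝ)^2/2) := by
      rw [hr]
      rw [show (r * ((n:ℝ)^2/2) : ℝ) = r * ((n:ℝ)^2/2) from rfl]
      have e1 : Real.sqrt ((n:ℝ)/2) * n = Real.sqrt ((n:ℝ)/2 * (n:ℝ)^2) := by
        rw [Real.sqrt_mul (by positivity) ((n:ℝ)^2), Real.sqrt_sq hn0.le]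
      have e2 : Real.sqrt (2/(n:ℝ)) * ((n:ℝ)^2/2)
          = Real.sqrt (2/(n:ℝ) * ((n:ℝ)^2/2)^2) := by
        rw [Real.sqrt_mul (by positivity) (((n:ℝ)^2/2)^2), Real.sqrt_sq (by positivity)]
      rw [e1, e2]
      congr 1
      field_simp
    have h2 : (n:ℝ) * Real.sqrt ((n:ℝ)/2) ≤ (n:ℝ) * A.copNorm := by
      rw [mul_comm ((n:ℝ)) (Real.sqrt ((n:ℝ)/2)), heq]
      exact h1
    exact le_of_mul_le_mul_left h2 hn0
  -- boundedness of the Schur-norm defining sets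
  have hSbdd : ∀ (M' : Matrix (Fin n) (Fin n) ℝ), (∀ i j, |M' i j| ≤ 1) →
      ∀ x ∈ {x | ∃ C' : Matrix (Fin n) (Fin n) ℂ, Matrix.copNorm C' ≤ 1 ∧
        x = Matrix.copNorm (Matrix.hadamard (M'.map Complex.ofReal) C')}, x ≤ (n:ℝ)^2 := by
    rintro M' hM' x ⟨C', hC', rfl⟩
    refine (RS.copNorm_le_sum_abs _).trans ?_
    have hb : ∀ j k : Fin n,
        ‖(Matrix.hadamard (M'.map Complex.ofReal) C') j k‖ ≤ 1 := by
      intro j k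
      rw [Matrix.hadamard_apply, Matrix.map_apply, norm_mul, Complex.norm_real, Real.norm_eq_abs]
      have := (RS.abs_entry_le_copNorm C' j k).trans hC'
      have := hM' j k
      have := norm_nonneg (C' j k)
      have habs : |M' j k| ≥ 0 := abs_nonneg _
      nlinarith
    calc ∑ j : Fin n, ∑ k : Fin n,
          ‖(Matrix.hadamard (M'.map Complex.ofReal) C') j k‖
        ≤ ∑ _j : Fin n, ∑ _k : Fin n, (1:ℝ) :=
          Finset.sum_le_sum fun j _ => Finset.sum_le_sum fun k _ => hb j k
      _ = (n:ℝ)^2 := by simp [Finset.sum_const]; ring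
  have hschur_le : ∀ (M' : Matrix (Fin n) (Fin n) ℝ), (∀ i j, |M' i j| ≤ 1) →
      Matrix.schurNorm (M'.map Complex.ofReal) ≤ (n:ℝ)^2 := by
    intro M' hM'
    exact Real.sSup_le (hSbdd M' hM') (by positivity)
  have h3 : A.copNorm ≤ Matrix.schurNorm (M.map Complex.ofReal) := by
    apply le_csSup ⟨(n:ℝ)^2, fun x hx => hSbdd M hMabs x hx⟩
    exact ⟨C, hCnorm, by rw [hA]⟩
  have h4 : Matrix.schurNorm (M.map Complex.ofReal) ≤ rSchur n := by
    apply le_csSup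
    · exact ⟨(n:ℝ)^2, by rintro x ⟨M', hM', rfl⟩; exact hschur_le M' hM'⟩
    · exact ⟨M, hMabs, rfl⟩
  linarith
end

section
/- Let n be a positive integer. The maximum of the entrywise 1-norm Σ_{i,j} |x_{ij}| over all n×n real orthogonal matrices X equals the maximum over all n×n matrices A with entries in {−1, 1} of the quantity ν_A := max{Tr(AX) : X an n×n real matrix with operator norm ‖X‖ ≤ 1}. -/
open scoped ComplexOrder

open scoped RealInnerProductSpace
open Matrix

namespace MaxOneNormAux
variable {n : ℕ}
local notation "E" => EuclideanSpace ℝ (Fin n)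

lemma apply_le (M : Matrix (Fin n) (Fin n) ℝ) (v : E) :
    ‖toEuclideanLin M v‖ ≤ M.ropNorm * ‖v‖ := by
  have := (LinearMap.toContinuousLinearMap (Matrix.toEuclideanLin M)).le_opNorm v
  simpa only [LinearMap.coe_toContinuousLinearMap', Matrix.ropNorm] using this

lemma ropNorm_nonneg (M : Matrix (Fin n) (Fin n) ℝ) : 0 ≤ M.ropNorm := norm_nonneg _

lemma ropNorm_le (M : Matrix (Fin n) (Fin n) ℝ) (c : ℝ) (hc : 0 ≤ c)
    (h : ∀ v : E, ‖toEuclideanLin M v‖ ≤ c * ‖v‖) : M.ropNorm ≤ c := by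
  refine ContinuousLinearMap.opNorm_le_bound _ hc ?_
  intro v; simpa using h v

lemma lin_mul (M N : Matrix (Fin n) (Fin n) ℝ) (x : E) :
    toEuclideanLin (M * N) x = toEuclideanLin M (toEuclideanLin N x) := by
  simp [Matrix.toEuclideanLin_apply, Matrix.mulVec_mulVec]

lemma adj (M : Matrix (Fin n) (Fin n) ℝ) (x y : E) :
    ⟪toEuclideanLin M x, y⟫ = ⟪x, toEuclideanLin M.transpose y⟫ := by
  have h : M.transpose = M.conjTranspose := by ext i j; simp [Matrix.conjTranspose]
  rw [h, Matrix.toEuclideanLin_conjTranspose_eq_adjoint, LinearMap.adjoint_inner_right]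

lemma lin_one (x : E) : toEuclideanLin (1 : Matrix (Fin n) (Fin n) ℝ) x = x := by
  have : toEuclideanLin (1 : Matrix (Fin n) (Fin n) ℝ) x
      = (WithLp.equiv 2 (Fin n → ℝ)).symm ((1 : Matrix (Fin n) (Fin n) ℝ) *ᵥ (WithLp.equiv 2 (Fin n → ℝ)) x) :=
    Matrix.toEuclideanLin_apply ..
  rw [this, Matrix.one_mulVec, Equiv.symm_apply_apply]

lemma orth_norm (U : Matrix (Fin n) (Fin n) ℝ) (hU : U.transpose * U = 1) (x : E) :
    ‖toEuclideanLin U x‖ = ‖x‖ := by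
  have h : ⟪toEuclideanLin U x, toEuclideanLin U x⟫ = ⟪x, x⟫ := by
    rw [adj, ← lin_mul, hU, lin_one]
  have h2 : ‖toEuclideanLin U x‖ ^ 2 = ‖x‖ ^ 2 := by
    rw [← real_inner_self_eq_norm_sq, ← real_inner_self_eq_norm_sq]; exact h
  nlinarith [norm_nonneg (toEuclideanLin U x), norm_nonneg x]

lemma orth_ropNorm_le (U : Matrix (Fin n) (Fin n) ℝ) (hU : U.transpose * U = 1) :
    U.ropNorm ≤ 1 := by
  refine ropNorm_le _ _ zero_le_one fun v => ?_
  rw [orth_norm U hU v, one_mul]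

lemma ropNorm_mul_le (M N : Matrix (Fin n) (Fin n) ℝ) :
    (M * N).ropNorm ≤ M.ropNorm * N.ropNorm := by
  refine ropNorm_le _ _ (mul_nonneg (ropNorm_nonneg M) (ropNorm_nonneg N)) fun v => ?_
  rw [lin_mul, mul_assoc]
  calc ‖toEuclideanLin M (toEuclideanLin N v)‖ ≤ M.ropNorm * ‖toEuclideanLin N v‖ := apply_le ..
    _ ≤ M.ropNorm * (N.ropNorm * ‖v‖) := by
        exact mul_le_mul_of_nonneg_left (apply_le ..) (ropNorm_nonneg M)

lemma entry_le (M : Matrix (Fin n) (Fin n) ℝ) (i j : Fin n) : |M i j| ≤ M.ropNorm := by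
  have h1 : toEuclideanLin M (EuclideanSpace.single j 1) i = M i j := by
    rw [Matrix.toEuclideanLin_apply, PiLp.toLp_apply]
    simp [Matrix.mulVec_single]
  have h2 : ⟪EuclideanSpace.single i (1:ℝ), toEuclideanLin M (EuclideanSpace.single j 1)⟫
      = M i j := by
    rw [EuclideanSpace.inner_single_left]; simpa using h1
  calc |M i j| = |⟪EuclideanSpace.single i (1:ℝ), toEuclideanLin M (EuclideanSpace.single j 1)⟫| := by rw [h2]
    _ ≤ ‖EuclideanSpace.single i (1:ℝ)‖ * ‖toEuclideanLin M (EuclideanSpace.single j 1)‖ :=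
        abs_real_inner_le_norm _ _
    _ ≤ 1 * (M.ropNorm * ‖EuclideanSpace.single j (1:ℝ)‖) := by
        refine mul_le_mul ?_ (apply_le ..) (norm_nonneg _) zero_le_one
        simp [EuclideanSpace.norm_single]
    _ = M.ropNorm := by simp [EuclideanSpace.norm_single]

lemma exists_polar (A : Matrix (Fin n) (Fin n) ℝ) :
    ∃ U P : Matrix (Fin n) (Fin n) ℝ, U.transpose * U = 1 ∧ U * U.transpose = 1 ∧
      P.PosSemidef ∧ A = U * P := by
  classical
  have hAA : (Aᴴ * A).PosSemidef := Matrix.posSemidef_conjTranspose_mul_self A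
  obtain ⟨P, hPsd, hPP⟩ : ∃ P : Matrix (Fin n) (Fin n) ℝ, P.PosSemidef ∧ P * P = Aᴴ * A := by
    open scoped MatrixOrder in
    exact ⟨CFC.sqrt (Aᴴ * A), (CFC.sqrt_nonneg _).posSemidef, CFC.sqrt_mul_sqrt_self _ hAA.nonneg⟩
  have hCT : ∀ M : Matrix (Fin n) (Fin n) ℝ, Mᴴ = Mᵀ := by
    intro M; ext i j; simp [Matrix.conjTranspose]
  have hPt : Pᵀ = P := by rw [← hCT]; exact hPsd.1
  set a := Matrix.toEuclideanLin A with ha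
  set p := Matrix.toEuclideanLin P with hp
  have hnorm : ∀ x : E, ‖a x‖ = ‖p x‖ := by
    intro x
    have h1 : ⟪a x, a x⟫ = ⟪p x, p x⟫ := by
      rw [ha, hp, adj A, adj P, ← lin_mul, ← lin_mul, hPt, hPP, ← hCT]
    have h2 : ‖a x‖ ^ 2 = ‖p x‖ ^ 2 := by
      rw [← real_inner_self_eq_norm_sq, ← real_inner_self_eq_norm_sq]; exact h1
    nlinarith [norm_nonneg (a x), norm_nonneg (p x)]
  have hker : LinearMap.ker p ≤ LinearMap.ker a := by
    intro x hx
    rw [LinearMap.mem_ker] at hx ⊢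
    have := hnorm x
    rw [hx, norm_zero, norm_eq_zero] at this
    exact this
  set L0 : ↥(LinearMap.range p) →ₗ[ℝ] E :=
    ((LinearMap.ker p).liftQ a hker).comp (p.quotKerEquivRange.symm : _ ≃ₗ[ℝ] _).toLinearMap
    with hL0
  have key : ∀ (x : E) (h : p x ∈ LinearMap.range p), L0 ⟨p x, h⟩ = a x := by
    intro x h
    rw [hL0]
    simp only [LinearMap.comp_apply, LinearEquiv.coe_coe]
    rw [LinearMap.quotKerEquivRange_symm_apply_image p x h]
    rfl
  have hLnorm : ∀ s : ↥(LinearMap.range p), ‖L0 s‖ = ‖s‖ := by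
    rintro ⟨s, x, rfl⟩
    rw [key x (LinearMap.mem_range_self p x)]
    exact hnorm x
  set L : ↥(LinearMap.range p) →ₗᵢ[ℝ] E := ⟨L0, hLnorm⟩ with hLdef
  set U0 := L.extend with hU0
  set U := Matrix.toEuclideanLin.symm U0.toLinearMap with hU
  have hUlin : Matrix.toEuclideanLin U = U0.toLinearMap := by
    rw [hU]; exact Matrix.toEuclideanLin.apply_symm_apply _
  have hfact : A = U * P := by
    apply Matrix.toEuclideanLin.injective
    ext x
    have h1 : Matrix.toEuclideanLin (U * P) x = U0 (p x) := by
      rw [lin_mul, hUlin]; rfl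
    have h2 : U0 (p x) = a x := by
      have h3 := L.extend_apply ⟨p x, LinearMap.mem_range_self p x⟩
      rw [← hU0] at h3
      rw [h3]
      exact key x (LinearMap.mem_range_self p x)
    rw [h1, h2]
  have horth : Uᵀ * U = 1 := by
    apply Matrix.toEuclideanLin.injective
    apply LinearMap.ext
    intro x
    apply ext_inner_left ℝ
    intro y
    rw [lin_mul, ← adj, hUlin]
    show ⟪U0 y, U0 x⟫ = ⟪y, Matrix.toEuclideanLin 1 x⟫
    rw [U0.inner_map_map, lin_one]
  exact ⟨U, P, horth, mul_eq_one_comm.mp horth, hPsd, hfact⟩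

lemma quad_le (M : Matrix (Fin n) (Fin n) ℝ) (hM : M.ropNorm ≤ 1) (v : Fin n → ℝ)
    (hv : ∑ s, v s * v s = 1) : ∑ i, ∑ j, v i * (M i j * v j) ≤ 1 := by
  set vE : E := (WithLp.equiv 2 (Fin n → ℝ)).symm v with hvE
  have happ : toEuclideanLin M vE = (WithLp.equiv 2 (Fin n → ℝ)).symm (M *ᵥ v) := by
    rw [hvE, Matrix.toEuclideanLin_apply]; rfl
  have hinner : ⟪vE, toEuclideanLin M vE⟫ = ∑ i, ∑ j, v i * (M i j * v j) := by
    rw [happ]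
    simp only [PiLp.inner_apply, RCLike.inner_apply, starRingEnd_apply, star_trivial,
      WithLp.equiv_symm_apply, PiLp.toLp_apply, hvE, Matrix.mulVec, dotProduct]
    exact Finset.sum_congr rfl fun i _ => by rw [mul_comm, Finset.mul_sum]
  have hnv : ‖vE‖ = 1 := by
    have h1 : ⟪vE, vE⟫ = (1:ℝ) := by
      simp only [PiLp.inner_apply, RCLike.inner_apply, starRingEnd_apply, star_trivial,
        WithLp.equiv_symm_apply, PiLp.toLp_apply, hvE]
      exact hv
    have h2 : ‖vE‖ ^ 2 = 1 := by rw [← real_inner_self_eq_norm_sq]; exact h1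
    nlinarith [norm_nonneg vE]
  calc ∑ i, ∑ j, v i * (M i j * v j) = ⟪vE, toEuclideanLin M vE⟫ := hinner.symm
    _ ≤ ‖vE‖ * ‖toEuclideanLin M vE‖ := real_inner_le_norm _ _
    _ ≤ ‖vE‖ * (M.ropNorm * ‖vE‖) := by
        exact mul_le_mul_of_nonneg_left (apply_le ..) (norm_nonneg _)
    _ = M.ropNorm := by rw [hnv]; ring
    _ ≤ 1 := hM

lemma trace_mul_le_trace (P M : Matrix (Fin n) (Fin n) ℝ) (hP : P.PosSemidef)
    (hM : M.ropNorm ≤ 1) : (P * M).trace ≤ P.trace := by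
  classical
  have hH : P.IsHermitian := hP.1
  set Q : Matrix (Fin n) (Fin n) ℝ := (hH.eigenvectorUnitary : Matrix (Fin n) (Fin n) ℝ) with hQdef
  set d : Fin n → ℝ := RCLike.ofReal ∘ hH.eigenvalues with hddef
  have hspec : P = Q * diagonal d * star Q := hH.spectral_theorem
  have hu := (hH.eigenvectorUnitary).2
  rw [Unitary.mem_iff] at hu
  have h1 : star Q * Q = 1 := hu.1
  have h2 : Q * star Q = 1 := hu.2
  have hd0 : ∀ i, 0 ≤ d i := by
    intro i
    simpa [hddef] using hP.eigenvalues_nonneg i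
  have hcol : ∀ i, ∑ s, Q s i * Q s i = 1 := by
    intro i
    have := congrFun (congrFun h1 i) i
    simpa [Matrix.mul_apply, Matrix.star_apply, Matrix.one_apply] using this
  set B := star Q * M * Q with hBdef
  have hB : ∀ i, B i i ≤ 1 := by
    intro i
    have hcalc : B i i = ∑ s, ∑ t, (fun k => Q k i) s * (M s t * (fun k => Q k i) t) := by
      simp only [hBdef, Matrix.mul_apply, Matrix.star_apply, star_trivial]
      rw [Finset.sum_comm]
      refine Finset.sum_congr rfl fun s _ => ?_
      rw [Finset.sum_mul]
      refine Finset.sum_congr rfl fun t _ => by ring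
    rw [hcalc]
    exact quad_le M hM _ (hcol i)
  have htrPM : (P * M).trace = ∑ i, d i * B i i := by
    rw [hspec]
    rw [show Q * diagonal d * star Q * M = Q * (diagonal d * (star Q * M)) by
      simp only [mul_assoc]]
    rw [Matrix.trace_mul_comm]
    rw [show diagonal d * (star Q * M) * Q = diagonal d * B by
      simp only [hBdef, mul_assoc]]
    simp [Matrix.trace, Matrix.diagonal_mul]
  have htrP : P.trace = ∑ i, d i := by
    rw [hspec, Matrix.trace_mul_comm, ← mul_assoc, h1, one_mul]
    simp [Matrix.trace]
  rw [htrPM, htrP]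
  calc ∑ i, d i * B i i ≤ ∑ i, d i * 1 :=
        Finset.sum_le_sum fun i _ => mul_le_mul_of_nonneg_left (hB i) (hd0 i)
    _ = ∑ i, d i := by simp

lemma trace_eq (A X : Matrix (Fin n) (Fin n) ℝ) :
    (A * X).trace = ∑ i, ∑ j, A i j * X j i := by
  simp [Matrix.trace, Matrix.mul_apply, Matrix.diag]

lemma ropNorm_zero : (0 : Matrix (Fin n) (Fin n) ℝ).ropNorm ≤ 1 := by
  refine ropNorm_le _ _ zero_le_one fun v => ?_
  rw [map_zero]
  simp [norm_nonneg]

end MaxOneNormAux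

/-- The maximum entrywise `1`-norm of an `n × n` real orthogonal matrix equals the maximum,
over all `±1` matrices `A`, of `ν_A := max {Tr (A * X) : ‖X‖ ≤ 1}`. -/
theorem max_one_norm_orthogonal (n : ℕ) (hn : 0 < n) :
    sSup {s : ℝ | ∃ X : Matrix (Fin n) (Fin n) ℝ, X.transpose * X = 1 ∧
        s = ∑ i, ∑ j, |X i j|} =
      sSup {t : ℝ | ∃ A : Matrix (Fin n) (Fin n) ℝ, (∀ i j, A i j = 1 ∨ A i j = -1) ∧
        t = sSup {u : ℝ | ∃ X : Matrix (Fin n) (Fin n) ℝ, Matrix.ropNorm X ≤ 1 ∧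
          u = (A * X).trace}} := by
  classical
  open MaxOneNormAux in
  set S1 : Set ℝ := {s : ℝ | ∃ X : Matrix (Fin n) (Fin n) ℝ, X.transpose * X = 1 ∧
      s = ∑ i, ∑ j, |X i j|} with hS1
  set I : Matrix (Fin n) (Fin n) ℝ → Set ℝ := fun A =>
      {u : ℝ | ∃ X : Matrix (Fin n) (Fin n) ℝ, Matrix.ropNorm X ≤ 1 ∧ u = (A * X).trace} with hI
  set S2 : Set ℝ := {t : ℝ | ∃ A : Matrix (Fin n) (Fin n) ℝ,
      (∀ i j, A i j = 1 ∨ A i j = -1) ∧ t = sSup (I A)} with hS2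
  -- boundedness of S1
  have hS1bdd : BddAbove S1 := by
    refine ⟨(n : ℝ) * n, ?_⟩
    rintro s ⟨X, hX, rfl⟩
    have hXn : Matrix.ropNorm X ≤ 1 := MaxOneNormAux.orth_ropNorm_le X hX
    calc ∑ i, ∑ j, |X i j| ≤ ∑ i : Fin n, ∑ j : Fin n, (1:ℝ) := by
          refine Finset.sum_le_sum fun i _ => Finset.sum_le_sum fun j _ => ?_
          exact le_trans (MaxOneNormAux.entry_le X i j) hXn
      _ = (n : ℝ) * n := by simp [mul_comm]
  -- boundedness of each I A
  have hIbdd : ∀ A : Matrix (Fin n) (Fin n) ℝ, (∀ i j, A i j = 1 ∨ A i j = -1) →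
      ∀ u ∈ I A, u ≤ (n : ℝ) * n := by
    rintro A hA u ⟨X, hX, rfl⟩
    rw [MaxOneNormAux.trace_eq]
    calc ∑ i, ∑ j, A i j * X j i ≤ ∑ i : Fin n, ∑ j : Fin n, (1:ℝ) := by
          refine Finset.sum_le_sum fun i _ => Finset.sum_le_sum fun j _ => ?_
          have h1 : |X j i| ≤ 1 := le_trans (MaxOneNormAux.entry_le X j i) hX
          rcases hA i j with h | h <;> rw [h]
          · calc 1 * X j i = X j i := one_mul _
              _ ≤ |X j i| := le_abs_self _
              _ ≤ 1 := h1
          · calc -1 * X j i = -(X j i) := by ring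
              _ ≤ |X j i| := neg_le_abs _
              _ ≤ 1 := h1
      _ = (n : ℝ) * n := by simp [mul_comm]
  have hIbddAbove : ∀ A : Matrix (Fin n) (Fin n) ℝ, (∀ i j, A i j = 1 ∨ A i j = -1) →
      BddAbove (I A) := fun A hA => ⟨(n : ℝ) * n, fun u hu => hIbdd A hA u hu⟩
  have hImem0 : ∀ A : Matrix (Fin n) (Fin n) ℝ, (0:ℝ) ∈ I A := by
    intro A
    exact ⟨0, MaxOneNormAux.ropNorm_zero, by simp⟩
  -- S2 bounded above
  have hS2bdd : BddAbove S2 := by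
    refine ⟨(n : ℝ) * n, ?_⟩
    rintro t ⟨A, hA, rfl⟩
    refine Real.sSup_le (hIbdd A hA) ?_
    positivity
  -- 0 ≤ sSup S2
  have hS2pos : (0:ℝ) ≤ sSup S2 := by
    have hA1 : ∀ i j : Fin n, (fun _ _ => (1:ℝ) : Matrix (Fin n) (Fin n) ℝ) i j = 1 ∨
        (fun _ _ => (1:ℝ) : Matrix (Fin n) (Fin n) ℝ) i j = -1 := fun i j => Or.inl rfl
    have h1 : sSup (I (fun _ _ => (1:ℝ))) ∈ S2 := ⟨_, hA1, rfl⟩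
    have h2 : (0:ℝ) ≤ sSup (I (fun _ _ => (1:ℝ))) :=
      le_csSup (hIbddAbove _ hA1) (hImem0 _)
    exact le_trans h2 (le_csSup hS2bdd h1)
  -- 0 ≤ sSup S1
  have hS1pos : (0:ℝ) ≤ sSup S1 := by
    have h1 : (∑ i, ∑ j, |(1 : Matrix (Fin n) (Fin n) ℝ) i j|) ∈ S1 :=
      ⟨1, by simp, rfl⟩
    have h2 : (0:ℝ) ≤ ∑ i, ∑ j, |(1 : Matrix (Fin n) (Fin n) ℝ) i j| := by positivity
    exact le_trans h2 (le_csSup hS1bdd h1)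
  apply le_antisymm
  · -- sSup S1 ≤ sSup S2
    refine Real.sSup_le ?_ hS2pos
    rintro s ⟨X, hX, rfl⟩
    set A : Matrix (Fin n) (Fin n) ℝ := fun i j => if 0 ≤ X j i then 1 else -1 with hAdef
    have hA : ∀ i j, A i j = 1 ∨ A i j = -1 := by
      intro i j
      by_cases h : 0 ≤ X j i
      · exact Or.inl (by simp [hAdef, h])
      · exact Or.inr (by simp [hAdef, h])
    have htr : (A * X).trace = ∑ i, ∑ j, |X i j| := by
      rw [MaxOneNormAux.trace_eq, Finset.sum_comm]
      refine Finset.sum_congr rfl fun j _ => Finset.sum_congr rfl fun i _ => ?_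
      by_cases h : 0 ≤ X j i
      · rw [show A i j = 1 by simp [hAdef, h], one_mul, abs_of_nonneg h]
      · rw [show A i j = -1 by simp [hAdef, h], abs_of_neg (lt_of_not_ge h)]
        ring
    have hmem : (∑ i, ∑ j, |X i j|) ∈ I A :=
      ⟨X, MaxOneNormAux.orth_ropNorm_le X hX, htr.symm⟩
    have h1 : (∑ i, ∑ j, |X i j|) ≤ sSup (I A) := le_csSup (hIbddAbove A hA) hmem
    have h2 : sSup (I A) ≤ sSup S2 := le_csSup hS2bdd ⟨A, hA, rfl⟩
    exact le_trans h1 h2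
  · -- sSup S2 ≤ sSup S1
    refine Real.sSup_le ?_ hS1pos
    rintro t ⟨A, hA, rfl⟩
    refine Real.sSup_le ?_ hS1pos
    rintro u ⟨X, hX, rfl⟩
    obtain ⟨U, P, hUo, hUo', hPsd, hfact⟩ := MaxOneNormAux.exists_polar A
    have hUn : Matrix.ropNorm U ≤ 1 := MaxOneNormAux.orth_ropNorm_le U hUo
    have hXU : Matrix.ropNorm (X * U) ≤ 1 := by
      calc Matrix.ropNorm (X * U) ≤ Matrix.ropNorm X * Matrix.ropNorm U :=
            MaxOneNormAux.ropNorm_mul_le X U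
        _ ≤ 1 * 1 := mul_le_mul hX hUn (MaxOneNormAux.ropNorm_nonneg U) zero_le_one
        _ = 1 := one_mul 1
    have step1 : (A * X).trace ≤ P.trace := by
      have h1 : (A * X).trace = (P * (X * U)).trace := by
        rw [hfact]
        rw [show U * P * X = U * (P * X) by rw [mul_assoc]]
        rw [Matrix.trace_mul_comm, mul_assoc]
      rw [h1]
      exact MaxOneNormAux.trace_mul_le_trace P (X * U) hPsd hXU
    have step2 : P.trace = (A * U.transpose).trace := by
      rw [hfact]
      rw [show U * P * Uᵀ = U * (P * Uᵀ) by rw [mul_assoc]]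
      rw [Matrix.trace_mul_comm, mul_assoc, hUo, mul_one]
    have step3 : (A * U.transpose).trace ≤ ∑ i, ∑ j, |U i j| := by
      rw [MaxOneNormAux.trace_eq]
      refine Finset.sum_le_sum fun i _ => Finset.sum_le_sum fun j _ => ?_
      have ht : (Uᵀ : Matrix (Fin n) (Fin n) ℝ) j i = U i j := rfl
      rw [ht]
      rcases hA i j with h | h <;> rw [h]
      · rw [one_mul]; exact le_abs_self _
      · rw [show (-1 : ℝ) * U i j = -(U i j) by ring]; exact neg_le_abs _
    have hmem : (∑ i, ∑ j, |U i j|) ∈ S1 := ⟨U, hUo, rfl⟩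
    calc (A * X).trace ≤ P.trace := step1
      _ = (A * U.transpose).trace := step2
      _ ≤ ∑ i, ∑ j, |U i j| := step3
      _ ≤ sSup S1 := le_csSup hS1bdd hmem
end
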